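/- Let $d\geq 3$ be an integer and let $(M,g)$ be a Riemannian manifold of dimension $d$ admitting the $L^1$-Sobolev inequality: there is $D>0$ with $\left(\int_M h^{d/(d-1)}\right)^{(d-1)/d}\leq D\int_M|\nabla h|$ for all nonnegative compactly supported $C^1$ functions $h$ on $M$. Then the product $M'=M\times\mathbb{R}$ (with the product metric) satisfies the $L^1$-Sobolev inequality in dimension $d+1$: $\left(\int_{M'} h^{(d+1)/d}\right)^{d/(d+1)}\leq D^{d/(d+1)}\int_{M'}|\nabla_{M'} h|$ for all nonnegative compactly supported $C^1$ functions $h$ on $M'$. -/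

import Mathlib

open MeasureTheory ENNReal

/-- the `L¹`-Sobolev inequality passes to the product with `ℝ`
(one dimension higher), in the abstract form with gradient modulus `G`:
the hypotheses encode the slice Sobolev inequality (together with
`|∇_{M_s}h| ≤ |∇_{M'}h|`) and the fundamental-theorem-of-calculus bound
(together with `|∂_s h| ≤ |∇_{M'}h|`). -/
theorem stmt9 (M : Type*) [MeasurableSpace M] (μ : Measure M) [SigmaFinite μ]
    (d : ℕ) (hd : 3 ≤ d) (D : ℝ≥0∞)
    (h G : M × ℝ → ℝ≥0∞) (hm : Measurable h) (hGm : Measurable G)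
    (hslice : ∀ s : ℝ,
      (∫⁻ x, h (x, s) ^ ((d : ℝ) / ((d : ℝ) - 1)) ∂μ) ^ (((d : ℝ) - 1) / d)
        ≤ D * ∫⁻ x, G (x, s) ∂μ)
    (hftc : ∀ x s, h (x, s) ≤ ∫⁻ t, G (x, t)) :
    (∫⁻ p, h p ^ (((d : ℝ) + 1) / d) ∂(μ.prod volume)) ^ ((d : ℝ) / ((d : ℝ) + 1))
      ≤ D ^ ((d : ℝ) / ((d : ℝ) + 1)) * ∫⁻ p, G p ∂(μ.prod volume) := by
  have hd0 : (0:ℝ) < d := by positivity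
  have hd1 : (1:ℝ) < d := by exact_mod_cast lt_of_lt_of_le (by norm_num) hd
  set C : ℝ≥0∞ := ∫⁻ p, G p ∂(μ.prod volume) with hC
  -- C as iterated integral with s outside
  have hCeq : C = ∫⁻ s, ∫⁻ x, G (x, s) ∂μ := by
    rw [hC, lintegral_prod_symm _ hGm.aemeasurable]
  -- FTC bound on slice integral of h
  have hslice1 : ∀ s : ℝ, ∫⁻ x, h (x, s) ∂μ ≤ C := by
    intro s
    calc ∫⁻ x, h (x, s) ∂μ ≤ ∫⁻ x, (∫⁻ t, G (x, t)) ∂μ :=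
          lintegral_mono fun x => hftc x s
      _ = C := (lintegral_prod _ hGm.aemeasurable).symm
  -- Hölder on each slice
  have hconj : ((d:ℝ) / ((d:ℝ) - 1)).HolderConjugate d := by
    constructor
    · rw [inv_div, inv_one]
      field_simp
      ring
    · exact div_pos hd0 (by linarith)
    · exact hd0
  have key : ∀ s : ℝ,
      ∫⁻ x, h (x, s) ^ (((d:ℝ) + 1) / d) ∂μ
        ≤ (D * ∫⁻ x, G (x, s) ∂μ) * C ^ (1 / (d:ℝ)) := by
    intro s
    have hms : Measurable fun x => h (x, s) := hm.comp measurable_prodMk_right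
    have hstep : ∫⁻ x, h (x, s) ^ (((d:ℝ) + 1) / d) ∂μ
        ≤ (∫⁻ x, h (x, s) ^ ((d:ℝ) / ((d:ℝ) - 1)) ∂μ) ^ (1 / ((d:ℝ) / ((d:ℝ) - 1)))
          * (∫⁻ x, (h (x, s) ^ (1 / (d:ℝ))) ^ (d:ℝ) ∂μ) ^ (1 / (d:ℝ)) := by
      have := ENNReal.lintegral_mul_le_Lp_mul_Lq μ hconj hms.aemeasurable
        (hms.pow_const (1 / (d:ℝ))).aemeasurable
      refine le_trans (le_of_eq ?_) this
      apply lintegral_congr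
      intro x
      rw [Pi.mul_apply, show ((d:ℝ) + 1) / d = 1 + 1 / d by field_simp,
        ENNReal.rpow_add_of_nonneg _ _ zero_le_one (by positivity), ENNReal.rpow_one]
    rw [one_div_div] at hstep
    have heq : ∀ x : M, (h (x, s) ^ (1 / (d:ℝ))) ^ (d:ℝ) = h (x, s) := by
      intro x
      rw [← ENNReal.rpow_mul, one_div, inv_mul_cancel₀ (ne_of_gt hd0), ENNReal.rpow_one]
    simp only [heq] at hstep
    refine hstep.trans ?_
    exact mul_le_mul' (hslice s) (ENNReal.rpow_le_rpow (hslice1 s) (by positivity))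
  -- integrate in s
  have hmr : Measurable fun p : M × ℝ => h p ^ (((d:ℝ) + 1) / d) :=
    hm.pow_const _
  have hmain : ∫⁻ p, h p ^ (((d:ℝ) + 1) / d) ∂(μ.prod volume)
      ≤ D * C ^ (((d:ℝ) + 1) / d) := by
    rw [lintegral_prod_symm _ hmr.aemeasurable]
    calc ∫⁻ s, ∫⁻ x, h (x, s) ^ (((d:ℝ) + 1) / d) ∂μ
        ≤ ∫⁻ s, (D * ∫⁻ x, G (x, s) ∂μ) * C ^ (1 / (d:ℝ)) := lintegral_mono key
      _ = D * C ^ (1 / (d:ℝ)) * ∫⁻ s, ∫⁻ x, G (x, s) ∂μ := by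
          rw [← lintegral_const_mul _ (Measurable.lintegral_prod_left (f := fun x s => G (x, s)) (hGm.comp (measurable_fst.prodMk measurable_snd)))]
          · apply lintegral_congr; intro s; ring
      _ = D * (C ^ (1 / (d:ℝ)) * C) := by rw [← hCeq]; ring
      _ = D * C ^ (((d:ℝ) + 1) / d) := by
          rw [show ((d:ℝ) + 1) / d = 1 / d + 1 by field_simp; ring,
            ENNReal.rpow_add_of_nonneg _ _ (by positivity) zero_le_one, ENNReal.rpow_one]
  calc (∫⁻ p, h p ^ (((d:ℝ) + 1) / d) ∂(μ.prod volume)) ^ ((d:ℝ) / ((d:ℝ) + 1))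
      ≤ (D * C ^ (((d:ℝ) + 1) / d)) ^ ((d:ℝ) / ((d:ℝ) + 1)) :=
        ENNReal.rpow_le_rpow hmain (by positivity)
    _ = D ^ ((d:ℝ) / ((d:ℝ) + 1)) * C := by
        rw [ENNReal.mul_rpow_of_nonneg _ _ (by positivity), ← ENNReal.rpow_mul]
        congr 1
        rw [show ((d:ℝ) + 1) / d * ((d:ℝ) / ((d:ℝ) + 1)) = 1 by field_simp,
          ENNReal.rpow_one]
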